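/- arXiv:2312.02952 — 2 statements merged into one kernel-verified Lean document; each statement's English description precedes it below -/
import Mathlib

section
/- For t in (0,1), the third moment Σ_{k≥1} k³·(k^{k-2}/k!)·t^{k-1}·e^{-kt} equals 1/(1−t)³. -/
open Real

open Finset FormalMultilinearSeries Set
open scoped ENNReal NNReal Topology



noncomputable def Dd (n m : ℕ) : ℝ :=
  ∑ k ∈ Finset.range (n+1), (-1:ℝ)^(n-k) * (n.choose k) * (k:ℝ)^m

lemma Dd_rec (n m : ℕ) :
    Dd (n+1) (m+1) = (n+1) * ∑ i ∈ Finset.range (m+1), (m.choose i : ℝ) * Dd n i := by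
  unfold Dd
  rw [Finset.sum_range_succ']
  have h0 : (-1:ℝ)^(n+1-0) * ((n+1).choose 0) * ((0:ℕ):ℝ)^(m+1) = 0 := by simp
  rw [h0, add_zero]
  have hterm : ∀ j ∈ Finset.range (n+1),
      (-1:ℝ)^(n+1-(j+1)) * ((n+1).choose (j+1)) * ((j+1:ℕ):ℝ)^(m+1)
        = (n+1) * ((-1:ℝ)^(n-j) * (n.choose j) * ((j:ℝ)+1)^m) := by
    intro j hj
    have hc : ((n+1).choose (j+1) * (j+1) : ℕ) = (n+1) * n.choose j :=
      (Nat.add_one_mul_choose_eq n j).symm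
    have hc' : (((n+1).choose (j+1) : ℝ)) * ((j:ℝ)+1) = (n+1) * (n.choose j : ℝ) := by
      exact_mod_cast congrArg (Nat.cast (R := ℝ)) hc
    have : ((j+1:ℕ):ℝ)^(m+1) = ((j:ℝ)+1)^m * ((j:ℝ)+1) := by
      push_cast; ring
    rw [this]
    have hsub : n+1-(j+1) = n-j := by omega
    rw [hsub]
    calc (-1:ℝ)^(n-j) * ((n+1).choose (j+1)) * (((j:ℝ)+1)^m * ((j:ℝ)+1))
        = (-1:ℝ)^(n-j) * (((n+1).choose (j+1) : ℝ) * ((j:ℝ)+1)) * ((j:ℝ)+1)^m := by ring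
      _ = (-1:ℝ)^(n-j) * ((n+1) * (n.choose j : ℝ)) * ((j:ℝ)+1)^m := by rw [hc']
      _ = (n+1) * ((-1:ℝ)^(n-j) * (n.choose j) * ((j:ℝ)+1)^m) := by ring
  rw [Finset.sum_congr rfl hterm, ← Finset.mul_sum]
  congr 1
  have hbin : ∀ j : ℕ, ((j:ℝ)+1)^m = ∑ i ∈ Finset.range (m+1), (m.choose i : ℝ) * (j:ℝ)^i := by
    intro j
    rw [add_pow]
    refine Finset.sum_congr rfl fun i hi => by ring
  calc ∑ j ∈ Finset.range (n+1), (-1:ℝ)^(n-j) * (n.choose j) * ((j:ℝ)+1)^m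
      = ∑ j ∈ Finset.range (n+1), ∑ i ∈ Finset.range (m+1),
          (m.choose i : ℝ) * ((-1:ℝ)^(n-j) * (n.choose j) * (j:ℝ)^i) := by
        refine Finset.sum_congr rfl fun j hj => ?_
        rw [hbin j, Finset.mul_sum]
        refine Finset.sum_congr rfl fun i hi => by ring
    _ = ∑ i ∈ Finset.range (m+1), (m.choose i : ℝ) * Dd n i := by
        rw [Finset.sum_comm]
        refine Finset.sum_congr rfl fun i hi => ?_
        rw [Dd, Finset.mul_sum]


lemma Dd_zero_exp (n : ℕ) (hn : n ≠ 0) : Dd n 0 = 0 := by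
  have h := Int.alternating_sum_range_choose_of_ne hn
  have h' : ((∑ i ∈ Finset.range (n+1), (-1:ℤ)^i * n.choose i : ℤ) : ℝ) = 0 := by
    rw [h]; norm_num
  push_cast at h'
  have : Dd n 0 = (-1:ℝ)^n * ∑ i ∈ Finset.range (n+1), (-1:ℝ)^i * n.choose i := by
    rw [Dd, Finset.mul_sum]
    refine Finset.sum_congr rfl fun k hk => ?_
    have hk' : k ≤ n := by simpa [Nat.lt_succ_iff] using hk
    have : (-1:ℝ)^(n-k) * (-1:ℝ)^k = (-1:ℝ)^n := by
      rw [← pow_add]; congr 1; omega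
    calc (-1:ℝ)^(n-k) * (n.choose k) * (k:ℝ)^0
        = ((-1:ℝ)^(n-k) * (-1:ℝ)^k) * ((-1:ℝ)^k)⁻¹ * (n.choose k) := by
          rw [pow_zero]; field_simp
      _ = (-1:ℝ)^n * ((-1:ℝ)^k * (n.choose k)) := by
          rw [this]
          have : ((-1:ℝ)^k)⁻¹ = (-1:ℝ)^k := by
            rcases Nat.even_or_odd k with h | h
            · simp [h.neg_one_pow]
            · simp [h.neg_one_pow, inv_neg]
          rw [this]; ring
  rw [this, h', mul_zero]

lemma Dd_lt (n : ℕ) : ∀ m, m < n → Dd n m = 0 := by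
  induction n with
  | zero => intro m hm; omega
  | succ n ih =>
    intro m hm
    match m with
    | 0 => exact Dd_zero_exp (n+1) (by omega)
    | m+1 =>
      rw [Dd_rec]
      have : ∑ i ∈ Finset.range (m+1), (m.choose i : ℝ) * Dd n i = 0 := by
        refine Finset.sum_eq_zero fun i hi => ?_
        have : i < n := by simp [Finset.mem_range] at hi; omega
        rw [ih i this, mul_zero]
      rw [this, mul_zero]

lemma Dd_diag (n : ℕ) : Dd n n = (n.factorial : ℝ) := by
  induction n with
  | zero => simp [Dd]
  | succ n ih =>
    rw [Dd_rec, Finset.sum_range_succ]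
    have hz : ∑ i ∈ Finset.range n, (n.choose i : ℝ) * Dd n i = 0 :=
      Finset.sum_eq_zero fun i hi => by
        rw [Dd_lt n i (Finset.mem_range.mp hi), mul_zero]
    rw [hz, zero_add, Nat.choose_self, ih]
    push_cast [Nat.factorial_succ]
    ring

lemma Dd_top (n : ℕ) : Dd n (n+1) = (n.factorial : ℝ) * n * (n+1) / 2 := by
  induction n with
  | zero => simp [Dd]
  | succ n ih =>
    rw [Dd_rec, Finset.sum_range_succ, Finset.sum_range_succ]
    have hz : ∑ i ∈ Finset.range n, ((n+1).choose i : ℝ) * Dd n i = 0 :=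
      Finset.sum_eq_zero fun i hi => by
        rw [Dd_lt n i (Finset.mem_range.mp hi), mul_zero]
    rw [hz, zero_add, Nat.choose_self, Nat.choose_succ_self_right, ih, Dd_diag]
    push_cast [Nat.factorial_succ]
    ring


noncomputable def cc (k : ℕ) : ℝ := (k:ℝ)^(k+1) / k.factorial

lemma exp_tsum (x : ℝ) : ∑' n : ℕ, x^n / n.factorial = Real.exp x := by
  rw [Real.exp_eq_exp_ℝ, NormedSpace.exp_eq_tsum_div]

lemma cc_nonneg (k : ℕ) : 0 ≤ cc k := div_nonneg (by positivity) (Nat.cast_nonneg _)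

lemma cc_le (k : ℕ) : cc k ≤ (k:ℝ) * Real.exp 1 ^ k := by
  have h : ((k:ℝ))^k / k.factorial ≤ Real.exp k :=
    Real.pow_div_factorial_le_exp (x := (k:ℝ)) (Nat.cast_nonneg k) k
  have hc : cc k = (k:ℝ) * ((k:ℝ)^k / k.factorial) := by
    rw [cc, pow_succ]; ring
  rw [hc, Real.exp_one_pow]
  exact mul_le_mul_of_nonneg_left h (Nat.cast_nonneg k)

lemma tsum_prod_eq_tsum_antidiagonal {F : ℕ×ℕ → ℝ} (h : Summable F) :
    ∑' p, F p = ∑' n, ∑ kl ∈ Finset.HasAntidiagonal.antidiagonal n, F kl := by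
  conv_rhs => congr; ext; rw [← Finset.sum_finset_coe, ← tsum_fintype (L := .unconditional _)]
  rw [← Finset.HasAntidiagonal.sigmaAntidiagonalEquivProd.tsum_eq F]
  exact Summable.tsum_sigma' (fun n => (hasSum_fintype _).summable)
    (Finset.HasAntidiagonal.sigmaAntidiagonalEquivProd.summable_iff.mpr h)


lemma small_eq (t : ℝ) (h0 : 0 < t) (h8 : t < 1/8) :
    ∑' k:ℕ, cc k * t^k * Real.exp (-(k:ℝ)*t) = ∑' n:ℕ, ((n:ℝ)*((n:ℝ)+1)/2) * t^n := by
  set F : ℕ×ℕ → ℝ := fun p => cc p.1 * t^p.1 * ((-(p.1:ℝ)*t)^p.2 / p.2.factorial) with hFdef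
  set ρ : ℝ := t * Real.exp (1 + t) with hρdef
  have hρ0 : 0 < ρ := by positivity
  have hρ1 : ρ < 1 := by
    have he : Real.exp (1 + t) < Real.exp 2 := by
      apply Real.exp_lt_exp.mpr; linarith
    have h2 : Real.exp 2 < 8 := by
      have h1 : Real.exp 1 < 2.7182818286 := Real.exp_one_lt_d9
      have : Real.exp 2 = Real.exp 1 * Real.exp 1 := by
        rw [← Real.exp_add]; norm_num
      rw [this]; nlinarith [Real.exp_pos 1]
    calc ρ < (1/8) * 8 := by
          apply mul_lt_mul'' h8 (he.trans h2) (le_of_lt h0) (Real.exp_pos _).le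
      _ = 1 := by norm_num
  -- row absolute values
  have habsrow : ∀ k : ℕ, Summable fun j => |F (k, j)| := by
    intro k
    have : ∀ j : ℕ, |F (k, j)| = (cc k * t^k) * (((k:ℝ)*t)^j / j.factorial) := by
      intro j
      have : |(-(k:ℝ)*t)^j| = ((k:ℝ)*t)^j := by
        rw [abs_pow, abs_mul, abs_neg, abs_of_nonneg (Nat.cast_nonneg k : (0:ℝ) ≤ k),
          abs_of_pos h0]
      simp only [hFdef, abs_mul, abs_div, this, abs_of_nonneg (cc_nonneg k),
        abs_of_pos (pow_pos h0 k), Nat.abs_cast, mul_div_assoc]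
    simp_rw [this]
    exact (Real.summable_pow_div_factorial ((k:ℝ)*t)).mul_left _
  have habsrowsum : ∀ k : ℕ, ∑' j, |F (k, j)| = cc k * t^k * Real.exp ((k:ℝ)*t) := by
    intro k
    have : ∀ j : ℕ, |F (k, j)| = (cc k * t^k) * (((k:ℝ)*t)^j / j.factorial) := by
      intro j
      have : |(-(k:ℝ)*t)^j| = ((k:ℝ)*t)^j := by
        rw [abs_pow, abs_mul, abs_neg, abs_of_nonneg (Nat.cast_nonneg k : (0:ℝ) ≤ k),
          abs_of_pos h0]
      simp only [hFdef, abs_mul, abs_div, this, abs_of_nonneg (cc_nonneg k),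
        abs_of_pos (pow_pos h0 k), Nat.abs_cast, mul_div_assoc]
    simp_rw [this]
    rw [tsum_mul_left, exp_tsum]
  have habs : Summable fun p : ℕ×ℕ => |F p| := by
    apply (summable_prod_of_nonneg (f := fun p : ℕ×ℕ => |F p|) (fun p => abs_nonneg _)).mpr
    constructor
    · exact fun k => habsrow k
    · refine Summable.of_nonneg_of_le (f := fun k : ℕ => (k:ℝ) * ρ^k)
        (fun k => tsum_nonneg fun j => abs_nonneg _) (fun k => ?_) ?_
      · show ∑' j, |F (k, j)| ≤ (k:ℝ) * ρ^k
        rw [habsrowsum k]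
        calc cc k * t^k * Real.exp ((k:ℝ)*t)
            ≤ ((k:ℝ) * Real.exp 1 ^ k) * t^k * Real.exp ((k:ℝ)*t) := by
              apply mul_le_mul_of_nonneg_right (mul_le_mul_of_nonneg_right (cc_le k)
                (pow_pos h0 k).le) (Real.exp_pos _).le
          _ = (k:ℝ) * ρ^k := by
              rw [mul_comm (k:ℝ) t, mul_comm t ((k:ℝ)), Real.exp_nat_mul, hρdef,
                Real.exp_add, mul_pow, mul_pow]
              ring
      · simpa using summable_pow_mul_geometric_of_norm_lt_one 1
          (r := ρ) (by rw [Real.norm_eq_abs, abs_of_pos hρ0]; exact hρ1)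
  have hF : Summable F := habs.of_abs
  have hrow : ∀ k : ℕ, ∑' j, F (k, j) = cc k * t^k * Real.exp (-(k:ℝ)*t) := by
    intro k
    have : ∀ j : ℕ, F (k, j) = (cc k * t^k) * ((-(k:ℝ)*t)^j / j.factorial) := fun j => rfl
    simp_rw [this]
    rw [tsum_mul_left, exp_tsum]
  have hdiag : ∀ n : ℕ, ∑ kl ∈ Finset.HasAntidiagonal.antidiagonal n, F kl = ((n:ℝ)*((n:ℝ)+1)/2) * t^n := by
    intro n
    rw [Finset.Nat.sum_antidiagonal_eq_sum_range_succ_mk]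
    have hterm : ∀ k ∈ Finset.range (n+1),
        F (k, n-k) = (t^n / n.factorial) * ((-1:ℝ)^(n-k) * (n.choose k) * (k:ℝ)^(n+1)) := by
      intro k hk
      have hkn : k ≤ n := Nat.lt_succ_iff.mp (Finset.mem_range.mp hk)
      have hneg : (-(k:ℝ)*t)^(n-k) = (-1:ℝ)^(n-k) * (k:ℝ)^(n-k) * t^(n-k) := by
        rw [show -(k:ℝ)*t = (-1) * ((k:ℝ)*t) by ring, mul_pow, mul_pow]
        ring
      have hkpow : (k:ℝ)^(k+1) * (k:ℝ)^(n-k) = (k:ℝ)^(n+1) := by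
        rw [← pow_add]; congr 1; omega
      have htpow : t^k * t^(n-k) = t^n := by
        rw [← pow_add]; congr 1; omega
      have hchoose : (n.choose k : ℝ) = n.factorial / (k.factorial * (n-k).factorial) :=
        Nat.cast_choose ℝ hkn
      have hkf : (k.factorial : ℝ) ≠ 0 := Nat.cast_ne_zero.mpr k.factorial_ne_zero
      have hnkf : ((n-k).factorial : ℝ) ≠ 0 := Nat.cast_ne_zero.mpr (n-k).factorial_ne_zero
      have hnf : (n.factorial : ℝ) ≠ 0 := Nat.cast_ne_zero.mpr n.factorial_ne_zero
      show cc k * t^k * ((-(k:ℝ)*t)^(n-k) / (n-k).factorial) = _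
      rw [cc, hneg, hchoose, ← hkpow, ← htpow]
      field_simp
    rw [Finset.sum_congr rfl hterm, ← Finset.mul_sum]
    have : ∑ k ∈ Finset.range (n+1), ((-1:ℝ)^(n-k) * (n.choose k) * (k:ℝ)^(n+1)) = Dd n (n+1) :=
      rfl
    rw [this, Dd_top]
    field_simp
  calc ∑' k:ℕ, cc k * t^k * Real.exp (-(k:ℝ)*t)
      = ∑' k:ℕ, ∑' j:ℕ, F (k, j) := by
        exact tsum_congr fun k => (hrow k).symm
    _ = ∑' p : ℕ×ℕ, F p := (Summable.tsum_prod' hF (fun k => (habsrow k).of_abs)).symm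
    _ = ∑' n, ∑ kl ∈ Finset.HasAntidiagonal.antidiagonal n, F kl := tsum_prod_eq_tsum_antidiagonal hF
    _ = ∑' n:ℕ, ((n:ℝ)*((n:ℝ)+1)/2) * t^n := tsum_congr hdiag


lemma gauss_series (t : ℝ) (h0 : 0 ≤ t) (h1 : t < 1) :
    ∑' n:ℕ, ((n:ℝ)*((n:ℝ)+1)/2) * t^n = t / (1-t)^3 := by
  have hnorm : ‖t‖ < 1 := by rw [Real.norm_eq_abs, abs_of_nonneg h0]; exact h1
  have hf : Summable fun i : ℕ => ‖t^i‖ := by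
    simp_rw [norm_pow]
    exact summable_geometric_of_lt_one (norm_nonneg t) hnorm
  have hg : Summable fun j : ℕ => ‖(j:ℝ) * t^j‖ := by
    have := summable_pow_mul_geometric_of_norm_lt_one (R := ℝ) 1 hnorm
    simp only [pow_one] at this
    exact this.abs.congr fun j => by simp [abs_mul, abs_pow]
  have hmul := tsum_mul_tsum_eq_tsum_sum_antidiagonal_of_summable_norm hf hg
  have hL : (∑' i:ℕ, t^i) * (∑' j:ℕ, (j:ℝ) * t^j) = (1-t)⁻¹ * (t / (1-t)^2) := by
    rw [tsum_geometric_of_lt_one h0 h1, tsum_coe_mul_geometric_of_norm_lt_one hnorm]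
  have hinner : ∀ n : ℕ, ∑ kl ∈ Finset.HasAntidiagonal.antidiagonal n, t^kl.1 * ((kl.2:ℝ) * t^kl.2)
      = ((n:ℝ)*((n:ℝ)+1)/2) * t^n := by
    intro n
    rw [Finset.Nat.sum_antidiagonal_eq_sum_range_succ_mk]
    have hterm : ∀ k ∈ Finset.range (n+1),
        t^k * (((n-k:ℕ):ℝ) * t^(n-k)) = ((n-k:ℕ):ℝ) * t^n := by
      intro k hk
      have hkn : k ≤ n := Nat.lt_succ_iff.mp (Finset.mem_range.mp hk)
      have : t^k * t^(n-k) = t^n := by rw [← pow_add]; congr 1; omega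
      calc t^k * (((n-k:ℕ):ℝ) * t^(n-k)) = ((n-k:ℕ):ℝ) * (t^k * t^(n-k)) := by ring
        _ = ((n-k:ℕ):ℝ) * t^n := by rw [this]
    rw [Finset.sum_congr rfl hterm, ← Finset.sum_mul]
    congr 1
    have hrefl : ∑ k ∈ Finset.range (n+1), (n-k:ℕ) = ∑ k ∈ Finset.range (n+1), k := by
      simpa using Finset.sum_range_reflect (fun j => j) (n+1)
    have : ∑ k ∈ Finset.range (n+1), ((n-k:ℕ):ℝ) = ∑ k ∈ Finset.range (n+1), (k:ℝ) := by
      rw [← Nat.cast_sum, hrefl, Nat.cast_sum]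
    rw [this]
    have := Finset.sum_range_id_mul_two (n+1)
    have hcast : (∑ k ∈ Finset.range (n+1), (k:ℝ)) * 2 = (n:ℝ) * ((n:ℝ)+1) := by
      have : ((∑ k ∈ Finset.range (n+1), k : ℕ) : ℝ) * 2 = (((n+1)*n : ℕ) : ℝ) := by
        exact_mod_cast congrArg (Nat.cast (R := ℝ)) this
      push_cast at this ⊢
      linarith
    linarith
  have h1t : (1:ℝ) - t ≠ 0 := by linarith
  calc ∑' n:ℕ, ((n:ℝ)*((n:ℝ)+1)/2) * t^n
      = ∑' n:ℕ, ∑ kl ∈ Finset.HasAntidiagonal.antidiagonal n, t^kl.1 * ((kl.2:ℝ) * t^kl.2) :=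
        (tsum_congr hinner).symm
    _ = (∑' i:ℕ, t^i) * (∑' j:ℕ, (j:ℝ) * t^j) := hmul.symm
    _ = (1-t)⁻¹ * (t / (1-t)^2) := hL
    _ = t / (1-t)^3 := by field_simp


lemma radius_ge : ENNReal.ofReal (Real.exp (-1)) ≤ (ofScalars ℝ cc).radius := by
  apply ENNReal.le_of_forall_nnreal_lt
  intro r hr
  apply FormalMultilinearSeries.le_radius_of_summable_norm
  have hr' : (r:ℝ) < Real.exp (-1) := by
    have := ENNReal.coe_lt_coe.mp (by
      rwa [ENNReal.ofReal_eq_coe_nnreal (Real.exp_pos _).le] at hr)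
    exact_mod_cast this
  have hre : Real.exp 1 * r < 1 := by
    have h := mul_lt_mul_of_pos_left hr' (Real.exp_pos 1)
    rwa [← Real.exp_add, add_neg_cancel, Real.exp_zero] at h
  refine Summable.of_nonneg_of_le (f := fun n : ℕ => (n:ℝ) * (Real.exp 1 * r)^n)
    (fun n => mul_nonneg (norm_nonneg _) (pow_nonneg r.coe_nonneg n)) (fun n => ?_) ?_
  · rw [ofScalars_norm, Real.norm_eq_abs, abs_of_nonneg (cc_nonneg n)]
    calc cc n * (r:ℝ)^n ≤ ((n:ℝ) * Real.exp 1 ^ n) * (r:ℝ)^n :=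
          mul_le_mul_of_nonneg_right (cc_le n) (pow_nonneg r.coe_nonneg n)
      _ = (n:ℝ) * (Real.exp 1 * r)^n := by rw [mul_pow]; ring
  · simpa using summable_pow_mul_geometric_of_norm_lt_one 1 (r := Real.exp 1 * (r:ℝ))
      (by rw [Real.norm_eq_abs, abs_of_nonneg (by positivity)]; exact hre)

lemma phi_lt (s : ℝ) (h1 : s < 1) : s * Real.exp (-s) < Real.exp (-1) := by
  have hne : s - 1 ≠ 0 := sub_ne_zero.mpr (ne_of_lt h1)
  have h2 := Real.add_one_lt_exp hne
  have hs : s < Real.exp (s-1) := by linarith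
  calc s * Real.exp (-s) < Real.exp (s-1) * Real.exp (-s) :=
        mul_lt_mul_of_pos_right hs (Real.exp_pos _)
    _ = Real.exp (-1) := by rw [← Real.exp_add]; ring_nf


lemma sum_phi_eq (s : ℝ) : (ofScalars ℝ cc).sum (s * Real.exp (-s))
    = ∑' k:ℕ, cc k * s^k * Real.exp (-(k:ℝ)*s) := by
  have h1 : (ofScalars ℝ cc).sum (s * Real.exp (-s))
      = ∑' k:ℕ, cc k • (s * Real.exp (-s))^k := ofScalars_sum_eq cc _
  rw [h1]
  refine tsum_congr fun k => ?_
  rw [smul_eq_mul, mul_pow, ← Real.exp_nat_mul]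
  have : (k:ℝ) * (-s) = -(k:ℝ)*s := by ring
  rw [this, mul_assoc]

lemma main_eqOn : EqOn (fun s => (ofScalars ℝ cc).sum (s * Real.exp (-s)))
    (fun s => s / (1-s)^3) (Ioo (0:ℝ) 1) := by
  have hrad : (0:ℝ≥0∞) < (ofScalars ℝ cc).radius :=
    lt_of_lt_of_le (by simp [Real.exp_pos]) radius_ge
  have hball := (ofScalars ℝ cc).hasFPowerSeriesOnBall hrad
  have hφ : ∀ s : ℝ, AnalyticAt ℝ (fun u : ℝ => u * Real.exp (-u)) s := fun s =>
    (analyticAt_id).mul (analyticAt_id.neg.rexp)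
  have hL : AnalyticOnNhd ℝ (fun s => (ofScalars ℝ cc).sum (s * Real.exp (-s))) (Ioo 0 1) := by
    intro s hs
    have hmem : s * Real.exp (-s) ∈ Metric.eball (0:ℝ) (ofScalars ℝ cc).radius := by
      rw [Metric.mem_eball, edist_zero_right]
      calc (‖s * Real.exp (-s)‖₊ : ℝ≥0∞) = ENNReal.ofReal ‖s * Real.exp (-s)‖ :=
            (ofReal_norm _).symm
        _ < ENNReal.ofReal (Real.exp (-1)) := by
            apply (ENNReal.ofReal_lt_ofReal_iff (Real.exp_pos _)).mpr
            rw [Real.norm_eq_abs, abs_of_nonneg (mul_nonneg hs.1.le (Real.exp_pos _).le)]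
            exact phi_lt s hs.2
        _ ≤ _ := radius_ge
    show AnalyticAt ℝ ((ofScalars ℝ cc).sum ∘ fun u : ℝ => u * Real.exp (-u)) s
    exact AnalyticAt.comp (g := (ofScalars ℝ cc).sum) (f := fun u : ℝ => u * Real.exp (-u))
      (hball.analyticAt_of_mem hmem) (hφ s)
  have hR : AnalyticOnNhd ℝ (fun s : ℝ => s / (1-s)^3) (Ioo 0 1) := by
    intro s hs
    exact (analyticAt_id).div (((analyticAt_const).sub analyticAt_id).pow 3)
      (pow_ne_zero 3 (ne_of_gt (by linarith [hs.2] : (0:ℝ) < 1 - s)))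
  refine AnalyticOnNhd.eqOn_of_preconnected_of_eventuallyEq hL hR
    (convex_Ioo (0:ℝ) 1).isPreconnected (z₀ := (1/16 : ℝ)) (by norm_num) ?_
  have hnb : Ioo (0:ℝ) (1/8) ∈ nhds (1/16 : ℝ) :=
    isOpen_Ioo.mem_nhds (by norm_num)
  filter_upwards [hnb] with s hs
  have h0 : 0 < s := hs.1
  have h8 : s < 1/8 := hs.2
  show (ofScalars ℝ cc).sum (s * Real.exp (-s)) = s / (1-s)^3
  rw [sum_phi_eq, small_eq s h0 h8, gauss_series s h0.le (by linarith)]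



theorem stmt_5 (t : ℝ) (h0 : 0 < t) (h1 : t < 1) :
    ∑' k : ℕ, (k : ℝ) ^ 3 * ((k : ℝ) ^ (k - 2) / (Nat.factorial k) * t ^ (k - 1)
      * Real.exp (-(k : ℝ) * t)) = 1 / (1 - t) ^ 3 := by
  have ht : t ≠ 0 := ne_of_gt h0
  have hkey : ∀ k : ℕ, (k : ℝ) ^ 3 * ((k : ℝ) ^ (k - 2) / (Nat.factorial k) * t ^ (k - 1)
      * Real.exp (-(k : ℝ) * t)) = (1/t) * (cc k * t^k * Real.exp (-(k:ℝ)*t)) := by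
    intro k
    match k with
    | 0 => simp [cc]
    | (n+1) =>
      have hp : (((n+1:ℕ)) : ℝ)^3 * (((n+1:ℕ)) : ℝ)^((n+1)-2) = (((n+1:ℕ)) : ℝ)^((n+1)+1) := by
        match n with
        | 0 => norm_num
        | (m+1) => rw [← pow_add]; congr 1; omega
      have htd : t^(n+1) / t = t^((n+1)-1) := by
        rw [eq_comm, eq_div_iff ht, ← pow_succ]; congr 1
      calc (((n+1:ℕ)) : ℝ)^3 * ((((n+1:ℕ)) : ℝ)^((n+1)-2) / (Nat.factorial (n+1)) * t^((n+1)-1)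
            * Real.exp (-((n+1:ℕ):ℝ)*t))
          = ((((n+1:ℕ)) : ℝ)^3 * (((n+1:ℕ)) : ℝ)^((n+1)-2)) / (Nat.factorial (n+1)) * t^((n+1)-1)
            * Real.exp (-((n+1:ℕ):ℝ)*t) := by ring
        _ = cc (n+1) * t^((n+1)-1) * Real.exp (-((n+1:ℕ):ℝ)*t) := by rw [hp, cc]
        _ = cc (n+1) * (t^(n+1)/t) * Real.exp (-((n+1:ℕ):ℝ)*t) := by rw [htd]
        _ = (1/t) * (cc (n+1) * t^(n+1) * Real.exp (-((n+1:ℕ):ℝ)*t)) := by ring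
  rw [tsum_congr hkey, tsum_mul_left]
  have hsum : ∑' k:ℕ, cc k * t^k * Real.exp (-(k:ℝ)*t) = t/(1-t)^3 :=
    (sum_phi_eq t).symm.trans (main_eqOn ⟨h0, h1⟩)
  rw [hsum]
  have h1t : (1:ℝ) - t ≠ 0 := ne_of_gt (by linarith)
  field_simp
end

section
/- The functions U_k(t) = (1/2)·t^k·e^{-kt}·Σ_{n=0}^{k-1} k^{n-1}/n! satisfy dU_k/dt = (1/2)k²c_k + Σ_{i+j=k} i·U_i·j·c_j − k·U_k with U_k(0)=0, where c_k(t) = k^{k-2}/k!·t^{k-1}e^{-kt}. -/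
open Real Finset

noncomputable def crgDensity (k : ℕ) (t : ℝ) : ℝ :=
  (k : ℝ) ^ (k - 2) / (Nat.factorial k) * t ^ (k - 1) * Real.exp (-(k : ℝ) * t)

noncomputable def unicycleAvg (k : ℕ) (t : ℝ) : ℝ :=
  (1 / 2) * t ^ k * Real.exp (-(k : ℝ) * t) *
    ∑ n ∈ Finset.range k, (k : ℝ) ^ ((n : ℤ) - 1) / (Nat.factorial n)

noncomputable def Amap (m : ℕ) : ℝ := ∑ n ∈ Finset.range m, (m : ℝ) ^ n / (Nat.factorial n)

lemma alt_sum_pow (n : ℕ) : ∀ j : ℕ, j < n →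
    ∑ i ∈ range (n+1), (-1:ℝ)^i * (n.choose i) * (i:ℝ)^j = 0 := by
  induction n with
  | zero => omega
  | succ n ih =>
    intro j hj
    cases j with
    | zero =>
      have h := Int.alternating_sum_range_choose_of_ne (n := n+1) (by omega)
      have := congrArg (fun z : ℤ => (z : ℝ)) h
      push_cast at this
      simpa using this
    | succ j' =>
      have hn1 : 1 ≤ n := by omega
      rw [Finset.sum_range_succ']
      simp only [Nat.cast_zero, pow_zero, mul_one, Nat.choose_zero_right, Nat.cast_one,
        zero_pow (Nat.succ_ne_zero j'), mul_zero, add_zero]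
      have hterm : ∀ i : ℕ, (-1:ℝ)^(i+1) * ((n+1).choose (i+1) : ℝ) * ((i+1 : ℕ) : ℝ)^(j'+1)
          = -((n:ℝ)+1) * ((-1:ℝ)^i * (n.choose i : ℝ) * ((i:ℝ)+1)^j') := by
        intro i
        have hc : ((n+1).choose (i+1) : ℝ) * ((i:ℝ)+1) = ((n:ℝ)+1) * (n.choose i : ℝ) := by
          have := Nat.add_one_mul_choose_eq n i
          have := congrArg (fun z : ℕ => (z : ℝ)) this
          push_cast at this
          linarith [this]
        push_cast
        calc (-1:ℝ)^(i+1) * ((n+1).choose (i+1) : ℝ) * ((i:ℝ)+1)^(j'+1)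
            = (-1:ℝ)^i * (-1) * ((((n+1).choose (i+1) : ℝ)) * ((i:ℝ)+1)) * ((i:ℝ)+1)^j' := by
              ring
          _ = (-1:ℝ)^i * (-1) * (((n:ℝ)+1) * (n.choose i : ℝ)) * ((i:ℝ)+1)^j' := by rw [hc]
          _ = -((n:ℝ)+1) * ((-1:ℝ)^i * (n.choose i : ℝ) * ((i:ℝ)+1)^j') := by ring
      rw [Finset.sum_congr rfl (fun i _ => hterm i), ← Finset.mul_sum]
      have step : ∑ i ∈ range (n+1), (-1:ℝ)^i * (n.choose i : ℝ) * ((i:ℝ)+1)^j'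
          = ∑ m ∈ range (j'+1), ((j'.choose m : ℝ) * (1:ℝ)^(j'-m)
              * ∑ i ∈ range (n+1), (-1:ℝ)^i * (n.choose i : ℝ) * (i:ℝ)^m) := by
        calc ∑ i ∈ range (n+1), (-1:ℝ)^i * (n.choose i : ℝ) * ((i:ℝ)+1)^j'
            = ∑ i ∈ range (n+1), ∑ m ∈ range (j'+1),
                (-1:ℝ)^i * (n.choose i : ℝ) * ((i:ℝ)^m * (1:ℝ)^(j'-m) * (j'.choose m)) := by
              apply Finset.sum_congr rfl; intro i _
              rw [add_pow (i:ℝ) 1 j', Finset.mul_sum]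
          _ = ∑ m ∈ range (j'+1), ∑ i ∈ range (n+1),
                (-1:ℝ)^i * (n.choose i : ℝ) * ((i:ℝ)^m * (1:ℝ)^(j'-m) * (j'.choose m)) :=
              Finset.sum_comm
          _ = ∑ m ∈ range (j'+1), ((j'.choose m : ℝ) * (1:ℝ)^(j'-m)
              * ∑ i ∈ range (n+1), (-1:ℝ)^i * (n.choose i : ℝ) * (i:ℝ)^m) := by
              apply Finset.sum_congr rfl; intro m _
              rw [Finset.mul_sum]
              apply Finset.sum_congr rfl; intro i _
              ring
      rw [step]
      have hzero : ∀ m ∈ range (j'+1),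
          (j'.choose m : ℝ) * (1:ℝ)^(j'-m)
              * ∑ i ∈ range (n+1), (-1:ℝ)^i * (n.choose i : ℝ) * (i:ℝ)^m = 0 := by
        intro m hm
        rw [ih m (by simp only [Finset.mem_range] at hm; omega)]
        ring
      rw [Finset.sum_congr rfl hzero]
      simp

lemma alt_sum_pow_self (n : ℕ) :
    ∑ i ∈ range (n+1), (-1:ℝ)^i * (n.choose i) * (i:ℝ)^n = (-1:ℝ)^n * (Nat.factorial n) := by
  induction n with
  | zero => simp
  | succ n ih =>
    rw [Finset.sum_range_succ']
    simp only [Nat.cast_zero, Nat.choose_zero_right, Nat.cast_one,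
      zero_pow (Nat.succ_ne_zero n), mul_zero, add_zero]
    have hterm : ∀ i : ℕ, (-1:ℝ)^(i+1) * ((n+1).choose (i+1) : ℝ) * ((i+1 : ℕ) : ℝ)^(n+1)
        = -((n:ℝ)+1) * ((-1:ℝ)^i * (n.choose i : ℝ) * ((i:ℝ)+1)^n) := by
      intro i
      have hc : ((n+1).choose (i+1) : ℝ) * ((i:ℝ)+1) = ((n:ℝ)+1) * (n.choose i : ℝ) := by
        have := congrArg (fun z : ℕ => (z : ℝ)) (Nat.add_one_mul_choose_eq n i)
        push_cast at this
        linarith [this]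
      push_cast
      calc (-1:ℝ)^(i+1) * ((n+1).choose (i+1) : ℝ) * ((i:ℝ)+1)^(n+1)
          = (-1:ℝ)^i * (-1) * ((((n+1).choose (i+1) : ℝ)) * ((i:ℝ)+1)) * ((i:ℝ)+1)^n := by ring
        _ = (-1:ℝ)^i * (-1) * (((n:ℝ)+1) * (n.choose i : ℝ)) * ((i:ℝ)+1)^n := by rw [hc]
        _ = -((n:ℝ)+1) * ((-1:ℝ)^i * (n.choose i : ℝ) * ((i:ℝ)+1)^n) := by ring
    rw [Finset.sum_congr rfl (fun i _ => hterm i), ← Finset.mul_sum]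
    have step : ∑ i ∈ range (n+1), (-1:ℝ)^i * (n.choose i : ℝ) * ((i:ℝ)+1)^n
        = ∑ m ∈ range (n+1), ((n.choose m : ℝ) * (1:ℝ)^(n-m)
            * ∑ i ∈ range (n+1), (-1:ℝ)^i * (n.choose i : ℝ) * (i:ℝ)^m) := by
      calc ∑ i ∈ range (n+1), (-1:ℝ)^i * (n.choose i : ℝ) * ((i:ℝ)+1)^n
          = ∑ i ∈ range (n+1), ∑ m ∈ range (n+1),
              (-1:ℝ)^i * (n.choose i : ℝ) * ((i:ℝ)^m * (1:ℝ)^(n-m) * (n.choose m)) := by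
            apply Finset.sum_congr rfl; intro i _
            rw [add_pow (i:ℝ) 1 n, Finset.mul_sum]
        _ = ∑ m ∈ range (n+1), ∑ i ∈ range (n+1),
              (-1:ℝ)^i * (n.choose i : ℝ) * ((i:ℝ)^m * (1:ℝ)^(n-m) * (n.choose m)) :=
            Finset.sum_comm
        _ = _ := by
            apply Finset.sum_congr rfl; intro m _
            rw [Finset.mul_sum]
            apply Finset.sum_congr rfl; intro i _
            ring
    rw [step, Finset.sum_range_succ]
    have hzero : ∀ m ∈ range n,
        (n.choose m : ℝ) * (1:ℝ)^(n-m)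
            * ∑ i ∈ range (n+1), (-1:ℝ)^i * (n.choose i : ℝ) * (i:ℝ)^m = 0 := by
      intro m hm
      rw [alt_sum_pow n m (Finset.mem_range.mp hm)]
      ring
    rw [Finset.sum_congr rfl hzero, Finset.sum_const, smul_zero, zero_add,
      Nat.choose_self, ih]
    push_cast [Nat.factorial_succ]
    ring

lemma neg_one_pow_sub (n i : ℕ) (h : i ≤ n) : (-1:ℝ)^(n-i) = (-1:ℝ)^n * (-1:ℝ)^i := by
  have h1 : (-1:ℝ)^(n-i) * (-1:ℝ)^i = (-1:ℝ)^n := by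
    rw [← pow_add]; congr 1; omega
  have h2 : (-1:ℝ)^i * (-1:ℝ)^i = 1 := by
    rw [← pow_add, ← two_mul, pow_mul]; norm_num
  calc (-1:ℝ)^(n-i) = (-1:ℝ)^(n-i) * ((-1:ℝ)^i * (-1:ℝ)^i) := by rw [h2, mul_one]
    _ = ((-1:ℝ)^(n-i) * (-1:ℝ)^i) * (-1:ℝ)^i := by ring
    _ = (-1:ℝ)^n * (-1:ℝ)^i := by rw [h1]

lemma alt_sum_shift (n : ℕ) (x : ℝ) :
    ∑ i ∈ range (n+1), (-1:ℝ)^(n-i) * (n.choose i) * (x+i)^n = (Nat.factorial n) := by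
  have step : ∑ i ∈ range (n+1), (-1:ℝ)^(n-i) * (n.choose i) * (x+i)^n
      = ∑ m ∈ range (n+1), ((-1:ℝ)^n * x^m * (n.choose m : ℝ)
          * ∑ i ∈ range (n+1), (-1:ℝ)^i * (n.choose i : ℝ) * (i:ℝ)^(n-m)) := by
    calc ∑ i ∈ range (n+1), (-1:ℝ)^(n-i) * (n.choose i) * (x+i)^n
        = ∑ i ∈ range (n+1), ∑ m ∈ range (n+1),
            (-1:ℝ)^n * (-1:ℝ)^i * (n.choose i : ℝ) * (x^m * (i:ℝ)^(n-m) * (n.choose m)) := by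
          apply Finset.sum_congr rfl; intro i hi
          rw [add_pow x (i:ℝ) n, Finset.mul_sum,
            neg_one_pow_sub n i (by simpa using Nat.lt_succ_iff.mp (Finset.mem_range.mp hi))]
      _ = ∑ m ∈ range (n+1), ∑ i ∈ range (n+1),
            (-1:ℝ)^n * (-1:ℝ)^i * (n.choose i : ℝ) * (x^m * (i:ℝ)^(n-m) * (n.choose m)) :=
          Finset.sum_comm
      _ = _ := by
          apply Finset.sum_congr rfl; intro m _
          rw [Finset.mul_sum]
          apply Finset.sum_congr rfl; intro i _
          ring
  rw [step, Finset.sum_range_succ']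
  have hzero : ∀ m ∈ range n,
      (-1:ℝ)^n * x^(m+1) * (n.choose (m+1) : ℝ)
          * ∑ i ∈ range (n+1), (-1:ℝ)^i * (n.choose i : ℝ) * (i:ℝ)^(n-(m+1)) = 0 := by
    intro m hm
    rw [alt_sum_pow n (n-(m+1)) (by have := Finset.mem_range.mp hm; omega)]
    ring
  rw [Finset.sum_congr rfl hzero, Finset.sum_const, smul_zero, zero_add]
  simp only [Nat.sub_zero, pow_zero, Nat.choose_zero_right, Nat.cast_one, mul_one, one_mul]
  rw [alt_sum_pow_self n]
  have h2 : (-1:ℝ)^n * (-1:ℝ)^n = 1 := by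
    rw [← pow_add, ← two_mul, pow_mul]; norm_num
  calc (-1:ℝ)^n * ((-1:ℝ)^n * (Nat.factorial n : ℝ)) = ((-1:ℝ)^n * (-1:ℝ)^n) * n.factorial := by ring
    _ = n.factorial := by rw [h2, one_mul]

lemma alt_sum_pow' (n j : ℕ) (h : j < n) :
    ∑ i ∈ range (n+1), (-1:ℝ)^(n-i) * (n.choose i) * (i:ℝ)^j = 0 := by
  have : ∀ i ∈ range (n+1), (-1:ℝ)^(n-i) * (n.choose i) * (i:ℝ)^j
      = (-1:ℝ)^n * ((-1:ℝ)^i * (n.choose i) * (i:ℝ)^j) := by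
    intro i hi
    rw [neg_one_pow_sub n i (by have := Finset.mem_range.mp hi; omega)]
    ring
  rw [Finset.sum_congr rfl this, ← Finset.mul_sum, alt_sum_pow n j h, mul_zero]

lemma hasDerivAt_term (c a : ℝ) (m : ℕ) (y : ℝ) :
    HasDerivAt (fun y : ℝ => c * (y + a)^m) (c * ((m:ℝ) * (y + a)^(m-1))) y := by
  have h := (((hasDerivAt_id y).add_const a).pow m).const_mul c
  simpa using h

lemma eq_of_hasDerivAt_eq (f g f' : ℝ → ℝ)
    (hf : ∀ y, HasDerivAt f (f' y) y) (hg : ∀ y, HasDerivAt g (f' y) y)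
    (y₀ : ℝ) (h0 : f y₀ = g y₀) (y : ℝ) : f y = g y := by
  have hd : ∀ z : ℝ, HasDerivAt (fun t => f t - g t) 0 z := by
    intro z; have := (hf z).sub (hg z); simp only [sub_self] at this; exact this
  have hdiff : Differentiable ℝ (fun t => f t - g t) := fun z => (hd z).differentiableAt
  have hz : ∀ z, deriv (fun t => f t - g t) z = 0 := fun z => (hd z).deriv
  have hc := is_const_of_deriv_eq_zero hdiff hz y y₀
  beta_reduce at hc
  linarith [hc, h0]

lemma choose_step (n i : ℕ) (hi : i ≤ n) :
    ((n+1).choose i : ℝ) * ((n+1-i : ℕ) : ℝ) = (((n+1:ℕ)):ℝ) * (n.choose i : ℝ) := by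
  have h : (n+1).choose i * (n+1-i) = (n+1) * n.choose i := by
    rw [← Nat.choose_succ_right_eq, Nat.add_one_mul_choose_eq]
  have := congrArg (fun z : ℕ => (z : ℝ)) h
  push_cast at this ⊢
  linarith [this]

lemma treeB (n : ℕ) (hn : 1 ≤ n) : ∀ y : ℝ,
    ∑ i ∈ Icc 1 n, (n.choose i : ℝ) * (i:ℝ)^(i-1) * (y + ((n-i : ℕ) : ℝ))^(n-i)
      = (n:ℝ) * (y + n)^(n-1) := by
  induction n, hn using Nat.le_induction with
  | base => intro y; simp
  | succ n hn ih =>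
    set φ : ℝ → ℝ := fun y => (((n+1:ℕ)):ℝ) * ((n:ℝ) * ((y+1) + n)^(n-1)) with hφ
    have hf : ∀ y, HasDerivAt (fun y => ∑ i ∈ Icc 1 (n+1),
        ((n+1).choose i : ℝ) * (i:ℝ)^(i-1) * (y + ((n+1-i : ℕ) : ℝ))^(n+1-i)) (φ y) y := by
      intro y
      have hsum := HasDerivAt.fun_sum (u := Icc 1 (n+1))
        (A := fun i y => ((n+1).choose i : ℝ) * (i:ℝ)^(i-1) * (y + ((n+1-i : ℕ) : ℝ))^(n+1-i))
        (A' := fun i => ((n+1).choose i : ℝ) * (i:ℝ)^(i-1) * (((n+1-i : ℕ):ℝ) * (y + ((n+1-i : ℕ) : ℝ))^((n+1-i)-1)))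
        (x := y)
        (fun i _ => by
          have := hasDerivAt_term (((n+1).choose i : ℝ) * (i:ℝ)^(i-1)) (((n+1-i : ℕ)):ℝ) (n+1-i) y
          simpa [mul_assoc] using this)
      have hval : ∑ i ∈ Icc 1 (n+1),
          ((n+1).choose i : ℝ) * (i:ℝ)^(i-1) * (((n+1-i : ℕ):ℝ) * (y + ((n+1-i : ℕ) : ℝ))^((n+1-i)-1))
          = φ y := by
        rw [← Finset.Ico_add_one_right_eq_Icc, Finset.sum_Ico_succ_top (by omega), Finset.Ico_add_one_right_eq_Icc]
        have htop : ((n+1).choose (n+1) : ℝ) * ((n+1:ℕ):ℝ)^((n+1)-1)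
            * (((n+1-(n+1) : ℕ):ℝ) * ((y:ℝ) + ((n+1-(n+1) : ℕ) : ℝ))^((n+1-(n+1))-1)) = 0 := by
          simp
        rw [htop, add_zero]
        have hcong : ∀ i ∈ Icc 1 n,
            ((n+1).choose i : ℝ) * (i:ℝ)^(i-1) * (((n+1-i : ℕ):ℝ) * (y + ((n+1-i : ℕ) : ℝ))^((n+1-i)-1))
            = (((n+1:ℕ)):ℝ) * ((n.choose i : ℝ) * (i:ℝ)^(i-1) * ((y+1) + ((n-i : ℕ) : ℝ))^(n-i)) := by
          intro i hi
          have hi' : i ≤ n := (Finset.mem_Icc.mp hi).2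
          have e2 : (n+1-i) - 1 = n - i := by omega
          have e1 : y + ((n+1-i : ℕ) : ℝ) = (y+1) + ((n-i : ℕ) : ℝ) := by
            have : (n+1-i : ℕ) = (n-i) + 1 := by omega
            rw [this]; push_cast; ring
          rw [e2, e1]
          have hcs := choose_step n i hi'
          calc ((n+1).choose i : ℝ) * (i:ℝ)^(i-1) * (((n+1-i : ℕ):ℝ) * ((y+1) + ((n-i : ℕ) : ℝ))^(n-i))
              = (((n+1).choose i : ℝ) * ((n+1-i : ℕ):ℝ)) * ((i:ℝ)^(i-1) * ((y+1) + ((n-i : ℕ) : ℝ))^(n-i)) := by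
                ring
            _ = ((((n+1:ℕ)):ℝ) * (n.choose i : ℝ)) * ((i:ℝ)^(i-1) * ((y+1) + ((n-i : ℕ) : ℝ))^(n-i)) := by
                rw [hcs]
            _ = (((n+1:ℕ)):ℝ) * ((n.choose i : ℝ) * (i:ℝ)^(i-1) * ((y+1) + ((n-i : ℕ) : ℝ))^(n-i)) := by
                ring
        rw [Finset.sum_congr rfl hcong, ← Finset.mul_sum, ih (y+1)]
      rw [← hval]
      exact hsum
    have hg : ∀ y, HasDerivAt (fun y => (((n+1:ℕ)):ℝ) * (y + ((n+1:ℕ):ℝ))^((n+1)-1)) (φ y) y := by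
      intro y
      have h := hasDerivAt_term (((n+1:ℕ)):ℝ) (((n+1:ℕ)):ℝ) ((n+1)-1) y
      have e : ((n+1)-1 : ℕ) = n := by omega
      rw [e] at h
      have hb : y + ((n+1:ℕ):ℝ) = (y+1) + (n:ℝ) := by push_cast; ring
      rw [hb] at h
      have : φ y = (((n+1:ℕ)):ℝ) * ((n:ℝ) * ((y+1) + (n:ℝ))^(n-1)) := rfl
      rw [this]
      have hfun : (fun y : ℝ => (((n+1:ℕ)):ℝ) * (y + ((n+1:ℕ):ℝ))^((n+1)-1))
          = fun y : ℝ => (((n+1:ℕ)):ℝ) * (y + ((n+1:ℕ):ℝ))^n := by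
        rw [e]
      rw [hfun]
      exact h
    have h0 : ∑ i ∈ Icc 1 (n+1),
        ((n+1).choose i : ℝ) * (i:ℝ)^(i-1) * ((-(((n+1:ℕ)):ℝ)) + ((n+1-i : ℕ) : ℝ))^(n+1-i)
        = (((n+1:ℕ)):ℝ) * ((-(((n+1:ℕ)):ℝ)) + ((n+1:ℕ):ℝ))^((n+1)-1) := by
      have hrhs : (((n+1:ℕ)):ℝ) * ((-(((n+1:ℕ)):ℝ)) + ((n+1:ℕ):ℝ))^((n+1)-1) = 0 := by
        have : (-(((n+1:ℕ)):ℝ)) + ((n+1:ℕ):ℝ) = 0 := by ring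
        rw [this, zero_pow (by omega), mul_zero]
      rw [hrhs]
      have hcong : ∀ i ∈ Icc 1 (n+1),
          ((n+1).choose i : ℝ) * (i:ℝ)^(i-1) * ((-(((n+1:ℕ)):ℝ)) + ((n+1-i : ℕ) : ℝ))^(n+1-i)
          = (-1:ℝ)^(n+1-i) * ((n+1).choose i : ℝ) * (i:ℝ)^n := by
        intro i hi
        obtain ⟨hi1, hi2⟩ := Finset.mem_Icc.mp hi
        have e1 : (-(((n+1:ℕ)):ℝ)) + ((n+1-i : ℕ) : ℝ) = -(i:ℝ) := by
          rw [Nat.cast_sub (by omega)]; push_cast; ring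
        rw [e1, neg_pow]
        have e3 : (i:ℝ)^(i-1) * (i:ℝ)^(n+1-i) = (i:ℝ)^n := by
          rw [← pow_add]; congr 1; omega
        calc ((n+1).choose i : ℝ) * (i:ℝ)^(i-1) * ((-1:ℝ)^(n+1-i) * (i:ℝ)^(n+1-i))
            = (-1:ℝ)^(n+1-i) * ((n+1).choose i : ℝ) * ((i:ℝ)^(i-1) * (i:ℝ)^(n+1-i)) := by ring
          _ = (-1:ℝ)^(n+1-i) * ((n+1).choose i : ℝ) * (i:ℝ)^n := by rw [e3]
      rw [Finset.sum_congr rfl hcong]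
      have hext : ∑ i ∈ range (n+2), (-1:ℝ)^(n+1-i) * ((n+1).choose i : ℝ) * (i:ℝ)^n
          = ∑ i ∈ Icc 1 (n+1), (-1:ℝ)^(n+1-i) * ((n+1).choose i : ℝ) * (i:ℝ)^n := by
        rw [Finset.range_eq_Ico, Finset.sum_eq_sum_Ico_succ_bot (by omega)]
        have hz : (-1:ℝ)^(n+1-0) * ((n+1).choose 0 : ℝ) * ((0:ℕ):ℝ)^n = 0 := by
          rw [Nat.cast_zero, zero_pow (by omega)]; ring
        rw [hz, zero_add, show n+2 = n+1+1 from rfl, Finset.Ico_add_one_right_eq_Icc]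
      rw [← hext, alt_sum_pow' (n+1) n (by omega)]
    intro y
    exact eq_of_hasDerivAt_eq _ _ φ hf hg (-(((n+1:ℕ)):ℝ)) h0 y

lemma descFactorial_step (n j : ℕ) :
    ((n+1).descFactorial j : ℝ) * ((n+1-j : ℕ) : ℝ) = (((n+1:ℕ)):ℝ) * (n.descFactorial j : ℝ) := by
  have h : (n+1-j) * (n+1).descFactorial j = (n+1) * n.descFactorial j := by
    rw [← Nat.descFactorial_succ, Nat.succ_descFactorial_succ]
  have := congrArg (fun z : ℕ => (z : ℝ)) h
  push_cast at this ⊢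
  linarith [this]

lemma cauchyId (n : ℕ) : ∀ x y : ℝ,
    ∑ i ∈ range (n+1), (n.choose i : ℝ) * (x + i)^i * (y + ((n-i : ℕ) : ℝ))^(n-i)
      = ∑ j ∈ range (n+1), (n.descFactorial j : ℝ) * (x + y + n)^(n-j) := by
  induction n with
  | zero => intro x y; simp
  | succ n ih =>
    intro x
    set φ : ℝ → ℝ := fun y => (((n+1:ℕ)):ℝ) *
      ∑ j ∈ range (n+1), (n.descFactorial j : ℝ) * (x + (y+1) + n)^(n-j) with hφ
    have hf : ∀ y, HasDerivAt (fun y => ∑ i ∈ range (n+2),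
        ((n+1).choose i : ℝ) * (x + i)^i * (y + ((n+1-i : ℕ) : ℝ))^(n+1-i)) (φ y) y := by
      intro y
      have hsum := HasDerivAt.fun_sum (u := range (n+2))
        (A := fun i y => ((n+1).choose i : ℝ) * (x + i)^i * (y + ((n+1-i : ℕ) : ℝ))^(n+1-i))
        (A' := fun i => ((n+1).choose i : ℝ) * (x + i)^i * (((n+1-i : ℕ):ℝ) * (y + ((n+1-i : ℕ) : ℝ))^((n+1-i)-1)))
        (x := y)
        (fun i _ => by
          have := hasDerivAt_term (((n+1).choose i : ℝ) * (x + i)^i) (((n+1-i : ℕ)):ℝ) (n+1-i) y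
          simpa [mul_assoc] using this)
      have hval : ∑ i ∈ range (n+2),
          ((n+1).choose i : ℝ) * (x + i)^i * (((n+1-i : ℕ):ℝ) * (y + ((n+1-i : ℕ) : ℝ))^((n+1-i)-1))
          = φ y := by
        rw [Finset.sum_range_succ]
        have htop : ((n+1).choose (n+1) : ℝ) * (x + ((n+1:ℕ)):ℝ)^(n+1)
            * (((n+1-(n+1) : ℕ):ℝ) * ((y:ℝ) + ((n+1-(n+1) : ℕ) : ℝ))^((n+1-(n+1))-1)) = 0 := by
          simp
        rw [htop, add_zero]
        have hcong : ∀ i ∈ range (n+1),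
            ((n+1).choose i : ℝ) * (x + i)^i * (((n+1-i : ℕ):ℝ) * (y + ((n+1-i : ℕ) : ℝ))^((n+1-i)-1))
            = (((n+1:ℕ)):ℝ) * ((n.choose i : ℝ) * (x + i)^i * ((y+1) + ((n-i : ℕ) : ℝ))^(n-i)) := by
          intro i hi
          have hi' : i ≤ n := by have := Finset.mem_range.mp hi; omega
          have e2 : (n+1-i) - 1 = n - i := by omega
          have e1 : y + ((n+1-i : ℕ) : ℝ) = (y+1) + ((n-i : ℕ) : ℝ) := by
            have : (n+1-i : ℕ) = (n-i) + 1 := by omega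
            rw [this]; push_cast; ring
          rw [e2, e1]
          have hcs := choose_step n i hi'
          calc ((n+1).choose i : ℝ) * (x+i)^i * (((n+1-i : ℕ):ℝ) * ((y+1) + ((n-i : ℕ) : ℝ))^(n-i))
              = (((n+1).choose i : ℝ) * ((n+1-i : ℕ):ℝ)) * ((x+i)^i * ((y+1) + ((n-i : ℕ) : ℝ))^(n-i)) := by
                ring
            _ = ((((n+1:ℕ)):ℝ) * (n.choose i : ℝ)) * ((x+i)^i * ((y+1) + ((n-i : ℕ) : ℝ))^(n-i)) := by
                rw [hcs]
            _ = (((n+1:ℕ)):ℝ) * ((n.choose i : ℝ) * (x+i)^i * ((y+1) + ((n-i : ℕ) : ℝ))^(n-i)) := by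
                ring
        rw [Finset.sum_congr rfl hcong, ← Finset.mul_sum, ih x (y+1)]
      rw [← hval]
      exact hsum
    have hg : ∀ y, HasDerivAt (fun y => ∑ j ∈ range (n+2),
        ((n+1).descFactorial j : ℝ) * (x + y + ((n+1:ℕ):ℝ))^(n+1-j)) (φ y) y := by
      intro y
      have hsum := HasDerivAt.fun_sum (u := range (n+2))
        (A := fun j y => ((n+1).descFactorial j : ℝ) * (x + y + ((n+1:ℕ):ℝ))^(n+1-j))
        (A' := fun j => ((n+1).descFactorial j : ℝ) * (((n+1-j : ℕ):ℝ) * (x + y + ((n+1:ℕ):ℝ))^((n+1-j)-1)))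
        (x := y)
        (fun j _ => by
          have h := hasDerivAt_term (((n+1).descFactorial j : ℝ)) ((x + ((n+1:ℕ):ℝ))) (n+1-j) y
          have hb : (fun y : ℝ => ((n+1).descFactorial j : ℝ) * (y + (x + ((n+1:ℕ):ℝ)))^(n+1-j))
              = fun y : ℝ => ((n+1).descFactorial j : ℝ) * (x + y + ((n+1:ℕ):ℝ))^(n+1-j) := by
            funext z; ring_nf
          rw [hb] at h
          have hb2 : y + (x + ((n+1:ℕ):ℝ)) = x + y + ((n+1:ℕ):ℝ) := by ring
          rw [hb2] at h
          exact h)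
      have hval : ∑ j ∈ range (n+2),
          ((n+1).descFactorial j : ℝ) * (((n+1-j : ℕ):ℝ) * (x + y + ((n+1:ℕ):ℝ))^((n+1-j)-1))
          = φ y := by
        rw [Finset.sum_range_succ]
        have htop : ((n+1).descFactorial (n+1) : ℝ)
            * (((n+1-(n+1) : ℕ):ℝ) * ((x + y + ((n+1:ℕ):ℝ)))^((n+1-(n+1))-1)) = 0 := by
          simp
        rw [htop, add_zero]
        have hcong : ∀ j ∈ range (n+1),
            ((n+1).descFactorial j : ℝ) * (((n+1-j : ℕ):ℝ) * (x + y + ((n+1:ℕ):ℝ))^((n+1-j)-1))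
            = (((n+1:ℕ)):ℝ) * ((n.descFactorial j : ℝ) * (x + (y+1) + n)^(n-j)) := by
          intro j hj
          have hj' : j ≤ n := by have := Finset.mem_range.mp hj; omega
          have e2 : (n+1-j) - 1 = n - j := by omega
          have e1 : x + y + ((n+1:ℕ):ℝ) = x + (y+1) + (n:ℝ) := by push_cast; ring
          rw [e2, e1]
          have hds := descFactorial_step n j
          calc ((n+1).descFactorial j : ℝ) * (((n+1-j : ℕ):ℝ) * (x + (y+1) + (n:ℝ))^(n-j))
              = (((n+1).descFactorial j : ℝ) * ((n+1-j : ℕ):ℝ)) * (x + (y+1) + (n:ℝ))^(n-j) := by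
                ring
            _ = ((((n+1:ℕ)):ℝ) * (n.descFactorial j : ℝ)) * (x + (y+1) + (n:ℝ))^(n-j) := by
                rw [hds]
            _ = (((n+1:ℕ)):ℝ) * ((n.descFactorial j : ℝ) * (x + (y+1) + (n:ℝ))^(n-j)) := by ring
        rw [Finset.sum_congr rfl hcong, ← Finset.mul_sum]
      rw [← hval]
      exact hsum
    have h0 : ∑ i ∈ range (n+2),
        ((n+1).choose i : ℝ) * (x + i)^i * ((-x - (((n+1:ℕ)):ℝ)) + ((n+1-i : ℕ) : ℝ))^(n+1-i)
        = ∑ j ∈ range (n+2),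
        ((n+1).descFactorial j : ℝ) * (x + (-x - (((n+1:ℕ)):ℝ)) + ((n+1:ℕ):ℝ))^(n+1-j) := by
      have hrhs : ∑ j ∈ range (n+2),
          ((n+1).descFactorial j : ℝ) * (x + (-x - (((n+1:ℕ)):ℝ)) + ((n+1:ℕ):ℝ))^(n+1-j)
          = ((n+1).factorial : ℝ) := by
        have hz : x + (-x - (((n+1:ℕ)):ℝ)) + ((n+1:ℕ):ℝ) = 0 := by ring
        rw [hz, Finset.sum_eq_single (n+1)]
        · rw [Nat.sub_self, pow_zero, mul_one, Nat.descFactorial_self]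
        · intro j hj hne
          have : n+1-j ≠ 0 := by have := Finset.mem_range.mp hj; omega
          rw [zero_pow this, mul_zero]
        · intro h; exact absurd (Finset.self_mem_range_succ (n+1)) h
      rw [hrhs]
      have hcong : ∀ i ∈ range (n+2),
          ((n+1).choose i : ℝ) * (x + i)^i * ((-x - (((n+1:ℕ)):ℝ)) + ((n+1-i : ℕ) : ℝ))^(n+1-i)
          = (-1:ℝ)^(n+1-i) * ((n+1).choose i : ℝ) * (x + i)^(n+1) := by
        intro i hi
        have hi' : i ≤ n+1 := by have := Finset.mem_range.mp hi; omega
        have e1 : (-x - (((n+1:ℕ)):ℝ)) + ((n+1-i : ℕ) : ℝ) = -(x + i) := by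
          rw [Nat.cast_sub (by omega)]; push_cast; ring
        rw [e1, neg_pow]
        have e3 : (x+i)^i * (x+i)^(n+1-i) = (x+i)^(n+1) := by
          rw [← pow_add]; congr 1; omega
        calc ((n+1).choose i : ℝ) * (x+i)^i * ((-1:ℝ)^(n+1-i) * (x+i)^(n+1-i))
            = (-1:ℝ)^(n+1-i) * ((n+1).choose i : ℝ) * ((x+i)^i * (x+i)^(n+1-i)) := by ring
          _ = (-1:ℝ)^(n+1-i) * ((n+1).choose i : ℝ) * (x+i)^(n+1) := by rw [e3]
      rw [Finset.sum_congr rfl hcong]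
      exact alt_sum_shift (n+1) x
    intro y
    exact eq_of_hasDerivAt_eq _ _ φ hf hg (-x - (((n+1:ℕ)):ℝ)) h0 y

lemma tri_swap (f : ℕ → ℕ → ℝ) : ∀ k : ℕ,
    ∑ i ∈ range k, ∑ l ∈ range (i+1), f l (i-l)
      = ∑ l ∈ range k, ∑ m ∈ range (k-l), f l m := by
  intro k
  induction k with
  | zero => simp
  | succ k ih =>
    rw [Finset.sum_range_succ, ih]
    conv_rhs => rw [Finset.sum_range_succ]
    have hr : ∀ l ∈ range k, ∑ m ∈ range (k+1-l), f l m
        = (∑ m ∈ range (k-l), f l m) + f l (k-l) := by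
      intro l hl
      have : k+1-l = (k-l)+1 := by have := Finset.mem_range.mp hl; omega
      rw [this, Finset.sum_range_succ]
    rw [Finset.sum_congr rfl hr, Finset.sum_add_distrib]
    have h2 : ∑ m ∈ range (k+1-k), f k m = f k 0 := by
      rw [Nat.add_sub_cancel_left]
      simp
    rw [h2, Finset.sum_range_succ, Nat.sub_self]
    ring

lemma fact_ne (m : ℕ) : ((Nat.factorial m : ℕ) : ℝ) ≠ 0 :=
  Nat.cast_ne_zero.mpr (Nat.factorial_ne_zero m)

lemma choose_cast_eq (n i : ℕ) (h : i ≤ n) :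
    (n.choose i : ℝ) = (n.factorial : ℝ) / ((i.factorial : ℝ) * ((n-i).factorial : ℝ)) := by
  have := congrArg (fun z : ℕ => (z : ℝ)) (Nat.choose_mul_factorial_mul_factorial h)
  push_cast at this
  field_simp
  linarith [this]

lemma descFactorial_cast_eq (n j : ℕ) (h : j ≤ n) :
    (n.descFactorial j : ℝ) = (n.factorial : ℝ) / (((n-j).factorial : ℝ)) := by
  have := congrArg (fun z : ℕ => (z : ℝ)) (Nat.factorial_mul_descFactorial h)
  push_cast at this
  field_simp
  linarith [this]

lemma Eform (m : ℕ) :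
    Amap m = (∑ l ∈ range (m+1),
        (l:ℝ)^l * ((m-l : ℕ) : ℝ)^(m-l) / ((Nat.factorial l) * (Nat.factorial (m-l))))
      - (m:ℝ)^m / (Nat.factorial m) := by
  have hc := cauchyId m 0 0
  simp only [zero_add] at hc
  have h1 : ∑ i ∈ range (m+1), ((m.choose i : ℝ) * (i:ℝ)^i * (((m-i : ℕ)):ℝ)^(m-i)) / (m.factorial : ℝ)
      = ∑ l ∈ range (m+1), (l:ℝ)^l * ((m-l : ℕ) : ℝ)^(m-l) / ((Nat.factorial l) * (Nat.factorial (m-l))) := by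
    apply Finset.sum_congr rfl
    intro i hi
    rw [choose_cast_eq m i (by have := Finset.mem_range.mp hi; omega)]
    field_simp
  have h2 : ∑ j ∈ range (m+1), ((m.descFactorial j : ℝ) * ((m:ℝ))^(m-j)) / (m.factorial : ℝ)
      = ∑ j ∈ range (m+1), ((m:ℝ))^(m-j) / (((m-j).factorial : ℝ)) := by
    apply Finset.sum_congr rfl
    intro j hj
    rw [descFactorial_cast_eq m j (by have := Finset.mem_range.mp hj; omega)]
    field_simp
  have h3 : ∑ j ∈ range (m+1), ((m:ℝ))^(m-j) / (((m-j).factorial : ℝ))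
      = ∑ n ∈ range (m+1), (m:ℝ)^n / (Nat.factorial n) := by
    have := Finset.sum_range_reflect (fun n => (m:ℝ)^n / (Nat.factorial n)) (m+1)
    simpa using this
  have h4 : ∑ n ∈ range (m+1), (m:ℝ)^n / (Nat.factorial n) = Amap m + (m:ℝ)^m / (Nat.factorial m) := by
    rw [Finset.sum_range_succ]; rfl
  have hdiv : ∑ i ∈ range (m+1), ((m.choose i : ℝ) * (i:ℝ)^i * (((m-i : ℕ)):ℝ)^(m-i)) / (m.factorial : ℝ)
      = ∑ j ∈ range (m+1), ((m.descFactorial j : ℝ) * ((m:ℝ))^(m-j)) / (m.factorial : ℝ) := by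
    rw [← Finset.sum_div, ← Finset.sum_div, hc]
  rw [h1, h2, h3, h4] at hdiv
  linarith [hdiv]

lemma L5form (n : ℕ) (hn : 1 ≤ n) :
    ∑ m ∈ range n, (m:ℝ)^m * ((n-m : ℕ) : ℝ)^(n-m-1) / ((Nat.factorial m) * (Nat.factorial (n-m)))
      = (n:ℝ)^n / (Nat.factorial n) := by
  have ht := treeB n hn 0
  simp only [zero_add] at ht
  set G : ℕ → ℝ := fun m =>
    (m:ℝ)^m * ((n-m : ℕ) : ℝ)^(n-m-1) / ((Nat.factorial m : ℝ) * (Nat.factorial (n-m) : ℝ)) with hG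
  have hIcc : ∑ i ∈ Icc 1 n, ((n.choose i : ℝ) * (i:ℝ)^(i-1) * (((n-i : ℕ)):ℝ)^(n-i)) / (n.factorial : ℝ)
      = ∑ j ∈ range n, ((n.choose (1+j) : ℝ) * ((1+j:ℕ):ℝ)^((1+j)-1) * (((n-(1+j) : ℕ)):ℝ)^(n-(1+j))) / (n.factorial : ℝ) := by
    rw [← Finset.Ico_add_one_right_eq_Icc, Finset.sum_Ico_eq_sum_range]
    simp
  have hterm : ∀ j ∈ range n,
      ((n.choose (1+j) : ℝ) * ((1+j:ℕ):ℝ)^((1+j)-1) * (((n-(1+j) : ℕ)):ℝ)^(n-(1+j))) / (n.factorial : ℝ)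
      = G (n-1-j) := by
    intro j hj
    have hj' : j < n := Finset.mem_range.mp hj
    rw [hG]
    simp only []
    have e1 : n - 1 - j = n - (1+j) := by omega
    have e2 : n - (n - 1 - j) = 1 + j := by omega
    have e3 : n - (n-1-j) - 1 = j := by omega
    rw [e3, e1]
    rw [show n - (n - (1+j)) = 1+j from by omega]
    have e4 : (1+j) - 1 = j := by omega
    rw [e4]
    rw [choose_cast_eq n (1+j) (by omega)]
    field_simp
  have hre := Finset.sum_range_reflect G n
  calc ∑ m ∈ range n, G m
      = ∑ j ∈ range n, G (n-1-j) := hre.symm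
    _ = ∑ j ∈ range n, ((n.choose (1+j) : ℝ) * ((1+j:ℕ):ℝ)^((1+j)-1) * (((n-(1+j) : ℕ)):ℝ)^(n-(1+j))) / (n.factorial : ℝ) :=
        (Finset.sum_congr rfl (fun j hj => (hterm j hj).symm))
    _ = ∑ i ∈ Icc 1 n, ((n.choose i : ℝ) * (i:ℝ)^(i-1) * (((n-i : ℕ)):ℝ)^(n-i)) / (n.factorial : ℝ) := hIcc.symm
    _ = (∑ i ∈ Icc 1 n, (n.choose i : ℝ) * (i:ℝ)^(i-1) * (((n-i : ℕ)):ℝ)^(n-i)) / (n.factorial : ℝ) := by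
        rw [Finset.sum_div]
    _ = ((n:ℝ) * (n:ℝ)^(n-1)) / (n.factorial : ℝ) := by rw [ht]
    _ = (n:ℝ)^n / (Nat.factorial n : ℝ) := by
        congr 1
        rw [← pow_succ']
        congr 1
        omega

lemma sum_Ioo_zero (g : ℕ → ℝ) (k : ℕ) (hk : 0 < k) :
    ∑ i ∈ range k, g i = g 0 + ∑ i ∈ Ioo 0 k, g i := by
  rw [Finset.range_eq_Ico, ← Finset.Ioo_insert_left hk, Finset.sum_insert (by simp)]

lemma keyId (k : ℕ) (hk : 1 ≤ k) :
    Amap k = (k:ℝ)^k / (Nat.factorial k)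
      + ∑ i ∈ Ioo 0 k, ((k-i : ℕ) : ℝ)^(k-i-1) / (Nat.factorial (k-i)) * Amap i := by
  have hk0 : 0 < k := hk
  -- abbreviations
  set T : ℕ → ℝ := fun l =>
    (l:ℝ)^l * ((k-l : ℕ) : ℝ)^(k-l) / ((Nat.factorial l : ℝ) * (Nat.factorial (k-l) : ℝ)) with hT
  set F : ℕ → ℕ → ℝ := fun l m =>
    (l:ℝ)^l * (m:ℝ)^m * ((k-l-m : ℕ) : ℝ)^(k-l-m-1)
      / ((Nat.factorial l : ℝ) * (Nat.factorial m : ℝ) * (Nat.factorial (k-l-m) : ℝ)) with hF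
  -- Amap k = ∑_{l<k} T l
  have hA : Amap k = ∑ l ∈ range k, T l := by
    rw [Eform k, Finset.sum_range_succ]
    have htk : (k:ℝ)^k * ((k-k : ℕ) : ℝ)^(k-k) / ((Nat.factorial k : ℝ) * (Nat.factorial (k-k) : ℝ))
        = (k:ℝ)^k / (Nat.factorial k : ℝ) := by
      rw [Nat.sub_self]
      norm_num [Nat.factorial]
    rw [htk]
    simp only [hT]
    ring
  -- the "diagonal" sum
  have hdiag : ∑ i ∈ range k, ((k-i : ℕ) : ℝ)^(k-i-1) / (Nat.factorial (k-i) : ℝ) * ((i:ℝ)^i / (Nat.factorial i : ℝ))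
      = (k:ℝ)^k / (Nat.factorial k : ℝ) := by
    rw [← L5form k hk]
    apply Finset.sum_congr rfl
    intro i _
    field_simp
  have hdiag0 : ((k-0 : ℕ) : ℝ)^(k-0-1) / (Nat.factorial (k-0) : ℝ) * (((0:ℕ):ℝ)^0 / (Nat.factorial 0 : ℝ))
      = (k:ℝ)^(k-1) / (Nat.factorial k : ℝ) := by
    norm_num [Nat.factorial]
  -- inner sum evaluation
  have hinner : ∀ l ∈ range k, ∑ m ∈ range (k-l), F l m = T l := by
    intro l hl
    have hl' : l < k := Finset.mem_range.mp hl
    have h1 : ∀ m ∈ range (k-l), F l m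
        = (l:ℝ)^l / (Nat.factorial l : ℝ)
          * ((m:ℝ)^m * (((k-l)-m : ℕ) : ℝ)^((k-l)-m-1) / ((Nat.factorial m : ℝ) * (Nat.factorial ((k-l)-m) : ℝ))) := by
      intro m _
      rw [hF]
      simp only []
      field_simp
    rw [Finset.sum_congr rfl h1, ← Finset.mul_sum, L5form (k-l) (by omega)]
    simp only [hT]
    field_simp
  -- expansion of w i * Amap i for i ∈ Ioo 0 k
  have hwA : ∀ i ∈ Ioo 0 k, ((k-i : ℕ) : ℝ)^(k-i-1) / (Nat.factorial (k-i) : ℝ) * Amap i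
      = (∑ l ∈ range (i+1), F l (i-l))
        - ((k-i : ℕ) : ℝ)^(k-i-1) / (Nat.factorial (k-i) : ℝ) * ((i:ℝ)^i / (Nat.factorial i : ℝ)) := by
    intro i hi
    obtain ⟨hi0, hik⟩ := Finset.mem_Ioo.mp hi
    rw [Eform i, mul_sub]
    congr 1
    rw [Finset.mul_sum]
    apply Finset.sum_congr rfl
    intro l hl
    have hl' : l ≤ i := by have := Finset.mem_range.mp hl; omega
    rw [hF]
    simp only []
    have e1 : k - l - (i-l) = k - i := by omega
    have e2 : k - l - (i-l) - 1 = k - i - 1 := by omega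
    rw [e1]
    field_simp
  -- put it together
  rw [Finset.sum_congr rfl hwA, Finset.sum_sub_distrib]
  have hIoo1 : ∑ i ∈ Ioo 0 k, (∑ l ∈ range (i+1), F l (i-l))
      = (∑ i ∈ range k, ∑ l ∈ range (i+1), F l (i-l)) - (∑ l ∈ range 1, F l (0-l)) := by
    rw [sum_Ioo_zero (fun i => ∑ l ∈ range (i+1), F l (i-l)) k hk0]
    ring
  have hIoo2 : ∑ i ∈ Ioo 0 k, ((k-i : ℕ) : ℝ)^(k-i-1) / (Nat.factorial (k-i) : ℝ) * ((i:ℝ)^i / (Nat.factorial i : ℝ))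
      = (k:ℝ)^k / (Nat.factorial k : ℝ) - (k:ℝ)^(k-1) / (Nat.factorial k : ℝ) := by
    have h2 := sum_Ioo_zero (fun i => ((k-i : ℕ) : ℝ)^(k-i-1) / (Nat.factorial (k-i) : ℝ) * ((i:ℝ)^i / (Nat.factorial i : ℝ))) k hk0
    rw [hdiag] at h2
    have hb : (fun i => ((k-i : ℕ) : ℝ)^(k-i-1) / (Nat.factorial (k-i) : ℝ) * ((i:ℝ)^i / (Nat.factorial i : ℝ))) 0
        = (k:ℝ)^(k-1) / (Nat.factorial k : ℝ) := by
      norm_num [Nat.factorial]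
    beta_reduce at hb
    rw [hb] at h2
    linarith [h2]
  have hF00 : ∑ l ∈ range 1, F l (0-l) = (k:ℝ)^(k-1) / (Nat.factorial k : ℝ) := by
    rw [Finset.sum_range_one, hF]
    simp only [Nat.sub_zero]
    norm_num [Nat.factorial]
  rw [hIoo1, hIoo2, hF00, tri_swap F k, Finset.sum_congr rfl hinner, ← hA]
  ring

lemma mulS (m : ℕ) (hm : 1 ≤ m) :
    (m:ℝ) * ∑ n ∈ Finset.range m, (m : ℝ) ^ ((n : ℤ) - 1) / (Nat.factorial n) = Amap m := by
  rw [Finset.mul_sum]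
  apply Finset.sum_congr rfl
  intro n _
  have hm0 : (m:ℝ) ≠ 0 := Nat.cast_ne_zero.mpr (by omega)
  rw [zpow_sub_one₀ hm0, zpow_natCast]
  field_simp

lemma pow_drop2 (m : ℕ) (hm : 1 ≤ m) : (m:ℝ) * (m:ℝ)^(m-2) = (m:ℝ)^(m-1) := by
  match m, hm with
  | 1, _ => norm_num
  | (n+2), _ =>
    rw [show n+2-2 = n from by omega, show n+2-1 = n+1 from by omega, pow_succ]
    ring

lemma pow_drop2' (k : ℕ) (hk : 1 ≤ k) : (k:ℝ)^2 * (k:ℝ)^(k-2) = (k:ℝ)^k := by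
  match k, hk with
  | 1, _ => norm_num
  | (n+2), _ =>
    rw [show n+2-2 = n from by omega, ← pow_add]
    congr 1
    omega

theorem stmt_6 :
    (∀ k ≥ 1, ∀ t : ℝ,
      HasDerivAt (unicycleAvg k)
        ((1 / 2) * (k : ℝ) ^ 2 * crgDensity k t
          + ∑ i ∈ Finset.Ioo 0 k,
              (i : ℝ) * unicycleAvg i t * ((k - i : ℕ) : ℝ) * crgDensity (k - i) t
          - (k : ℝ) * unicycleAvg k t) t) ∧
    (∀ k ≥ 1, unicycleAvg k 0 = 0) := by
  constructor
  · intro k hk t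
    set S : ℝ := ∑ n ∈ Finset.range k, (k : ℝ) ^ ((n : ℤ) - 1) / (Nat.factorial n) with hS
    -- the derivative
    have h1 : HasDerivAt (fun t : ℝ => (1/2 : ℝ) * t^k) ((1/2 : ℝ) * ((k:ℝ) * t^(k-1))) t :=
      (hasDerivAt_pow k t).const_mul (1/2 : ℝ)
    have h2 : HasDerivAt (fun t : ℝ => Real.exp (-(k:ℝ) * t)) ((-(k:ℝ)) * Real.exp (-(k:ℝ) * t)) t := by
      have hlin : HasDerivAt (fun t : ℝ => -(k:ℝ) * t) (-(k:ℝ)) t := by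
        simpa using (hasDerivAt_id t).const_mul (-(k:ℝ))
      have := (Real.hasDerivAt_exp (-(k:ℝ) * t)).comp t hlin
      simpa [Function.comp_def, mul_comm] using this
    have H : HasDerivAt (unicycleAvg k)
        (((1/2 : ℝ) * ((k:ℝ) * t^(k-1)) * Real.exp (-(k:ℝ) * t)
          + (1/2 : ℝ) * t^k * ((-(k:ℝ)) * Real.exp (-(k:ℝ) * t))) * S) t := by
      have := (h1.mul h2).mul_const S
      exact this
    have hEq : (1 / 2) * (k : ℝ) ^ 2 * crgDensity k t
          + (∑ i ∈ Finset.Ioo 0 k,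
              (i : ℝ) * unicycleAvg i t * ((k - i : ℕ) : ℝ) * crgDensity (k - i) t)
          - (k : ℝ) * unicycleAvg k t
        = ((1/2 : ℝ) * ((k:ℝ) * t^(k-1)) * Real.exp (-(k:ℝ) * t)
          + (1/2 : ℝ) * t^k * ((-(k:ℝ)) * Real.exp (-(k:ℝ) * t))) * S := by
      have hD : ((1/2 : ℝ) * ((k:ℝ) * t^(k-1)) * Real.exp (-(k:ℝ) * t)
          + (1/2 : ℝ) * t^k * ((-(k:ℝ)) * Real.exp (-(k:ℝ) * t))) * S
          = (1/2 : ℝ) * t^(k-1) * Real.exp (-(k:ℝ) * t) * Amap k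
            - (k:ℝ) * unicycleAvg k t := by
        rw [← mulS k hk, ← hS, unicycleAvg]
        rw [← hS]
        ring
      rw [hD]
      -- first summand
      have hc : (1 / 2) * (k : ℝ) ^ 2 * crgDensity k t
          = (1/2 : ℝ) * t^(k-1) * Real.exp (-(k:ℝ) * t) * ((k:ℝ)^k / (Nat.factorial k)) := by
        rw [crgDensity, ← pow_drop2' k hk]
        field_simp
      have hsummand : ∀ i ∈ Finset.Ioo 0 k,
          (i : ℝ) * unicycleAvg i t * ((k - i : ℕ) : ℝ) * crgDensity (k - i) t
          = (1/2 : ℝ) * t^(k-1) * Real.exp (-(k:ℝ) * t)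
            * (((k-i : ℕ) : ℝ)^(k-i-1) / (Nat.factorial (k-i)) * Amap i) := by
        intro i hi
        obtain ⟨hi0, hik⟩ := Finset.mem_Ioo.mp hi
        rw [unicycleAvg, crgDensity]
        have hAi : (i:ℝ) * ∑ n ∈ Finset.range i, (i : ℝ) ^ ((n : ℤ) - 1) / (Nat.factorial n) = Amap i :=
          mulS i (by omega)
        have hpw : ((k-i : ℕ):ℝ) * ((k-i : ℕ):ℝ)^(k-i-2) = ((k-i : ℕ):ℝ)^(k-i-1) :=
          pow_drop2 (k-i) (by omega)
        have htt : t^i * t^(k-i-1) = t^(k-1) := by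
          rw [← pow_add]; congr 1; omega
        have hee : Real.exp (-(i:ℝ) * t) * Real.exp (-((k-i:ℕ):ℝ) * t) = Real.exp (-(k:ℝ) * t) := by
          rw [← Real.exp_add]
          congr 1
          rw [Nat.cast_sub (by omega)]
          ring
        calc (i : ℝ) * ((1/2) * t^i * Real.exp (-(i:ℝ) * t) * ∑ n ∈ Finset.range i, (i : ℝ) ^ ((n : ℤ) - 1) / (Nat.factorial n))
              * ((k - i : ℕ) : ℝ) * (((k-i:ℕ) : ℝ) ^ (k-i - 2) / (Nat.factorial (k-i)) * t ^ (k-i - 1) * Real.exp (-((k-i:ℕ) : ℝ) * t))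
            = ((i:ℝ) * ∑ n ∈ Finset.range i, (i : ℝ) ^ ((n : ℤ) - 1) / (Nat.factorial n))
              * (((k-i:ℕ):ℝ) * ((k-i:ℕ):ℝ)^(k-i-2))
              * (t^i * t^(k-i-1)) * (Real.exp (-(i:ℝ) * t) * Real.exp (-((k-i:ℕ):ℝ) * t))
              * (1/2) / (Nat.factorial (k-i)) := by
              ring
          _ = Amap i * (((k-i:ℕ):ℝ)^(k-i-1)) * t^(k-1) * Real.exp (-(k:ℝ) * t) * (1/2) / (Nat.factorial (k-i)) := by
              rw [hAi, hpw, htt, hee]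
          _ = (1/2 : ℝ) * t^(k-1) * Real.exp (-(k:ℝ) * t)
              * (((k-i : ℕ) : ℝ)^(k-i-1) / (Nat.factorial (k-i)) * Amap i) := by
              ring
      rw [hc, Finset.sum_congr rfl hsummand, ← Finset.mul_sum, ← mul_add, keyId k hk]
    rw [hEq]
    exact H
  · intro k hk
    rw [unicycleAvg]
    rw [zero_pow (by omega)]
    ring
end
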